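/- Let μ be a linear functional on ℂ[x] and suppose (p_n) are monic polynomials with deg p_n = n satisfying μ(p_m p_n) = C_n δ_{mn}. Then for distinct y_1,…,y_m: ∫ Δ(x)² ∏_{j=1}^n ∏_{k=1}^m (y_k - x_j) dμ(x_1)⋯dμ(x_n) = n! C_0 C_1 ⋯ C_{n-1} · det_{1≤j,k≤m}(p_{n+j-1}(y_k)) / Δ(y), where the left side denotes μ applied in each variable x_1,…,x_n. -/

import Mathlib

open Finset Equiv


noncomputable def muIter (μ : Polynomial ℂ →ₗ[ℂ] ℂ) :
    (n : ℕ) → MvPolynomial (Fin n) ℂ → ℂ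
  | 0, P => MvPolynomial.constantCoeff P
  | n + 1, P =>
      muIter μ n
        (((MvPolynomial.finSuccEquiv ℂ n) P).sum fun i c => μ (Polynomial.X ^ i) • c)

/-- The coefficient-wise application of `μ`, as a linear map. -/
noncomputable def muStep (μ : Polynomial ℂ →ₗ[ℂ] ℂ) (n : ℕ) :
    Polynomial (MvPolynomial (Fin n) ℂ) →ₗ[ℂ] MvPolynomial (Fin n) ℂ :=
  Polynomial.lsum (fun i => μ (Polynomial.X ^ i) • LinearMap.id)

lemma muIter_succ (μ : Polynomial ℂ →ₗ[ℂ] ℂ) (n : ℕ) (P : MvPolynomial (Fin (n+1)) ℂ) :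
    muIter μ (n+1) P = muIter μ n (muStep μ n ((MvPolynomial.finSuccEquiv ℂ n) P)) := rfl

lemma muIter_add (μ : Polynomial ℂ →ₗ[ℂ] ℂ) (n : ℕ) (P Q : MvPolynomial (Fin n) ℂ) :
    muIter μ n (P + Q) = muIter μ n P + muIter μ n Q := by
  induction n with
  | zero => simp [muIter]
  | succ n ih => rw [muIter_succ, muIter_succ, muIter_succ, map_add, map_add, ih]

lemma muIter_smul (μ : Polynomial ℂ →ₗ[ℂ] ℂ) (n : ℕ) (c : ℂ) (P : MvPolynomial (Fin n) ℂ) :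
    muIter μ n (c • P) = c * muIter μ n P := by
  induction n with
  | zero => simp [muIter, smul_eq_mul]
  | succ n ih => rw [muIter_succ, muIter_succ, map_smul, map_smul, ih]

lemma muIter_zero (μ : Polynomial ℂ →ₗ[ℂ] ℂ) (n : ℕ) : muIter μ n 0 = 0 := by
  have := muIter_smul μ n 0 0
  simpa using this

lemma muIter_sum (μ : Polynomial ℂ →ₗ[ℂ] ℂ) (n : ℕ) {α : Type*} (s : Finset α)
    (f : α → MvPolynomial (Fin n) ℂ) :
    muIter μ n (∑ i ∈ s, f i) = ∑ i ∈ s, muIter μ n (f i) := by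
  induction s using Finset.cons_induction with
  | empty => simp [muIter_zero]
  | cons a s ha ih => rw [Finset.sum_cons, Finset.sum_cons, muIter_add, ih]

lemma muIter_C_mul (μ : Polynomial ℂ →ₗ[ℂ] ℂ) (n : ℕ) (a : ℂ) (P : MvPolynomial (Fin n) ℂ) :
    muIter μ n (MvPolynomial.C a * P) = a * muIter μ n P := by
  rw [← MvPolynomial.smul_eq_C_mul, muIter_smul]

lemma mu_as_sum (μ : Polynomial ℂ →ₗ[ℂ] ℂ) (q : Polynomial ℂ) :
    μ q = ∑ i ∈ Finset.range (q.natDegree + 1), q.coeff i * μ (Polynomial.X ^ i) := by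
  conv_lhs => rw [Polynomial.as_sum_range' q (q.natDegree + 1) (Nat.lt_succ_self _)]
  rw [map_sum]
  refine Finset.sum_congr rfl fun i _ => ?_
  rw [← Polynomial.smul_X_eq_monomial, map_smul, smul_eq_mul]

lemma muStep_map_mul_C (μ : Polynomial ℂ →ₗ[ℂ] ℂ) (n : ℕ) (q : Polynomial ℂ)
    (G : MvPolynomial (Fin n) ℂ) :
    muStep μ n ((q.map (algebraMap ℂ (MvPolynomial (Fin n) ℂ))) * Polynomial.C G)
      = μ q • G := by
  have hdeg : ((q.map (algebraMap ℂ (MvPolynomial (Fin n) ℂ))) * Polynomial.C G).natDegree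
      < q.natDegree + 1 := by
    refine Nat.lt_succ_of_le (le_trans Polynomial.natDegree_mul_le ?_)
    simp [Polynomial.natDegree_map_le]
  have h : muStep μ n ((q.map (algebraMap ℂ (MvPolynomial (Fin n) ℂ))) * Polynomial.C G)
      = ((q.map (algebraMap ℂ (MvPolynomial (Fin n) ℂ))) * Polynomial.C G).sum
        fun i c => μ (Polynomial.X ^ i) • c := rfl
  rw [h, Polynomial.sum_over_range' _ (fun i => by simp) (q.natDegree + 1) hdeg,
    mu_as_sum μ q, Finset.sum_smul]
  refine Finset.sum_congr rfl fun i _ => ?_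
  rw [Polynomial.coeff_mul_C, Polynomial.coeff_map, ← Algebra.smul_def, smul_smul, mul_comm]

lemma aeval_X_map (n : ℕ) (q : Polynomial ℂ) :
    Polynomial.aeval (Polynomial.X : Polynomial (MvPolynomial (Fin n) ℂ)) q
      = q.map (algebraMap ℂ (MvPolynomial (Fin n) ℂ)) := by
  induction q using Polynomial.induction_on' with
  | add p q hp hq => simp [hp, hq]
  | monomial i c =>
      simp [Polynomial.aeval_monomial, Polynomial.map_monomial,
        ← Polynomial.C_mul_X_pow_eq_monomial, Polynomial.algebraMap_apply]

lemma muIter_prod_aeval (μ : Polynomial ℂ →ₗ[ℂ] ℂ) (n : ℕ) (q : Fin n → Polynomial ℂ) :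
    muIter μ n (∏ j : Fin n, Polynomial.aeval (MvPolynomial.X j) (q j)) = ∏ j, μ (q j) := by
  induction n with
  | zero => simp [muIter]
  | succ n ih =>
      rw [muIter_succ, Fin.prod_univ_succ, map_mul, map_prod]
      have h0 : (MvPolynomial.finSuccEquiv ℂ n) (Polynomial.aeval (MvPolynomial.X 0) (q 0))
          = (q 0).map (algebraMap ℂ (MvPolynomial (Fin n) ℂ)) := by
        have h := Polynomial.aeval_algHom_apply (MvPolynomial.finSuccEquiv ℂ n).toAlgHom
          (MvPolynomial.X 0) (q 0)
        simp only [AlgEquiv.toAlgHom_apply, AlgEquiv.toAlgHom_eq_coe, AlgHom.coe_coe,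
          MvPolynomial.finSuccEquiv_X_zero] at h
        rw [← h, aeval_X_map]
      have hs : ∀ j : Fin n,
          (MvPolynomial.finSuccEquiv ℂ n) (Polynomial.aeval (MvPolynomial.X j.succ) (q j.succ))
          = Polynomial.C (Polynomial.aeval (MvPolynomial.X j) (q j.succ)) := by
        intro j
        have h := Polynomial.aeval_algHom_apply (MvPolynomial.finSuccEquiv ℂ n).toAlgHom
          (MvPolynomial.X j.succ) (q j.succ)
        simp only [AlgEquiv.toAlgHom_apply, AlgEquiv.toAlgHom_eq_coe, AlgHom.coe_coe,
          MvPolynomial.finSuccEquiv_X_succ] at h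
        have h2 := Polynomial.aeval_algHom_apply
          (Polynomial.CAlgHom : MvPolynomial (Fin n) ℂ →ₐ[ℂ] Polynomial (MvPolynomial (Fin n) ℂ))
          (MvPolynomial.X j) (q j.succ)
        have hC : ⇑(Polynomial.CAlgHom : MvPolynomial (Fin n) ℂ →ₐ[ℂ]
            Polynomial (MvPolynomial (Fin n) ℂ)) = Polynomial.C := rfl
        rw [hC] at h2
        rw [← h]
        exact h2
      rw [h0, Finset.prod_congr rfl (fun j _ => hs j), ← map_prod (Polynomial.C : MvPolynomial (Fin n) ℂ →+* Polynomial (MvPolynomial (Fin n) ℂ))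
          (fun j => Polynomial.aeval (MvPolynomial.X j) (q j.succ)) Finset.univ,
        muStep_map_mul_C, muIter_smul, ih, Fin.prod_univ_succ]

lemma prod_pairs_eq {M : Type*} [CommMonoid M] {N : ℕ} (f : Fin N → Fin N → M) :
    ∏ pr ∈ Finset.univ.filter (fun pr : Fin N × Fin N => pr.1 < pr.2), f pr.1 pr.2
      = ∏ i : Fin N, ∏ j ∈ Finset.Ioi i, f i j := by
  rw [Finset.prod_filter, Fintype.prod_prod_type]
  refine Finset.prod_congr rfl fun i _ => ?_
  rw [← Finset.prod_filter, Finset.filter_lt_eq_Ioi]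

lemma prod_Ioi_eq_ite {M : Type*} [CommMonoid M] {N : ℕ} (f : Fin N → Fin N → M) :
    (∏ i : Fin N, ∏ j ∈ Finset.Ioi i, f i j)
      = ∏ i : Fin N, ∏ j : Fin N, (if i < j then f i j else 1) := by
  refine Finset.prod_congr rfl fun i _ => ?_
  rw [← Finset.prod_filter, Finset.filter_lt_eq_Ioi]

lemma prod_pairs_append {R : Type*} [CommMonoid R] {n m : ℕ}
    (a : Fin n → R) (b : Fin m → R) (g : R → R → R) :
    (∏ i : Fin (n+m), ∏ j ∈ Finset.Ioi i, g (Fin.append a b i) (Fin.append a b j))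
      = (∏ i : Fin n, ∏ j ∈ Finset.Ioi i, g (a i) (a j)) *
        (∏ k : Fin m, ∏ l ∈ Finset.Ioi k, g (b k) (b l)) *
        (∏ i : Fin n, ∏ k : Fin m, g (a i) (b k)) := by
  rw [prod_Ioi_eq_ite]
  rw [← Equiv.prod_comp finSumFinEquiv
    (fun i => ∏ j : Fin (n+m), (if i < j then g (Fin.append a b i) (Fin.append a b j) else 1))]
  have inner : ∀ s : Fin n ⊕ Fin m,
      (∏ j : Fin (n+m), (if finSumFinEquiv s < j then
          g (Fin.append a b (finSumFinEquiv s)) (Fin.append a b j) else 1))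
      = ∏ t : Fin n ⊕ Fin m, (if finSumFinEquiv s < finSumFinEquiv t then
          g (Fin.append a b (finSumFinEquiv s)) (Fin.append a b (finSumFinEquiv t)) else 1) :=
    fun s => (Equiv.prod_comp finSumFinEquiv _).symm
  simp only [inner]
  rw [Fintype.prod_sum_type]
  have hlt_ll : ∀ (i j : Fin n), (Fin.castAdd m i < Fin.castAdd m j) ↔ i < j := by
    intro i j; simp only [Fin.lt_def, Fin.coe_castAdd]
  have hlt_rr : ∀ (k l : Fin m), (Fin.natAdd n k < Fin.natAdd n l) ↔ k < l := by
    intro k l; simp only [Fin.lt_def, Fin.coe_natAdd]; omega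
  have hlt_lr : ∀ (i : Fin n) (k : Fin m), Fin.castAdd m i < Fin.natAdd n k := by
    intro i k; simp [Fin.lt_def]; omega
  have hlt_rl : ∀ (k : Fin m) (i : Fin n), ¬ (Fin.natAdd n k < Fin.castAdd m i) := by
    intro k i; simp [Fin.lt_def]; omega
  simp only [finSumFinEquiv_apply_left, finSumFinEquiv_apply_right, Fintype.prod_sum_type,
    Fin.append_left, Fin.append_right]
  rw [Finset.prod_mul_distrib, Finset.prod_mul_distrib]
  have e1 : ∀ i : Fin n, (∏ j : Fin n, if Fin.castAdd m i < Fin.castAdd m j then g (a i) (a j) else 1)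
      = ∏ j : Fin n, if i < j then g (a i) (a j) else 1 := by
    intro i; exact Finset.prod_congr rfl fun j _ => by rw [if_congr (hlt_ll i j) rfl rfl]
  have e2 : ∀ i : Fin n, (∏ k : Fin m, if Fin.castAdd m i < Fin.natAdd n k then g (a i) (b k) else 1)
      = ∏ k : Fin m, g (a i) (b k) := by
    intro i; exact Finset.prod_congr rfl fun k _ => if_pos (hlt_lr i k)
  have e3 : ∀ k : Fin m, (∏ i : Fin n, if Fin.natAdd n k < Fin.castAdd m i then g (b k) (a i) else 1)
      = 1 := by
    intro k; exact Finset.prod_eq_one fun i _ => if_neg (hlt_rl k i)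
  have e4 : ∀ k : Fin m, (∏ l : Fin m, if Fin.natAdd n k < Fin.natAdd n l then g (b k) (b l) else 1)
      = ∏ l : Fin m, if k < l then g (b k) (b l) else 1 := by
    intro k; exact Finset.prod_congr rfl fun l _ => by rw [if_congr (hlt_rr k l) rfl rfl]
  simp only [e1, e2, e3, e4, one_mul, mul_one]
  rw [prod_Ioi_eq_ite (fun i j => g (a i) (a j)), prod_Ioi_eq_ite (fun k l => g (b k) (b l)),
    Finset.prod_const_one, one_mul]
  exact mul_right_comm _ _ _

noncomputable def Phi {n m : ℕ} (σ : Perm (Fin n)) (ρ : Perm (Fin m)) : Perm (Fin (n+m)) :=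
  finSumFinEquiv.permCongr (Equiv.sumCongr σ ρ)

lemma Phi_castAdd {n m : ℕ} (σ : Perm (Fin n)) (ρ : Perm (Fin m)) (i : Fin n) :
    Phi σ ρ (Fin.castAdd m i) = Fin.castAdd m (σ i) := by
  simp [Phi, Equiv.permCongr_apply, finSumFinEquiv_symm_apply_castAdd]

lemma Phi_natAdd {n m : ℕ} (σ : Perm (Fin n)) (ρ : Perm (Fin m)) (k : Fin m) :
    Phi σ ρ (Fin.natAdd n k) = Fin.natAdd n (ρ k) := by
  simp [Phi, Equiv.permCongr_apply, finSumFinEquiv_symm_apply_natAdd]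

lemma Phi_sign {n m : ℕ} (σ : Perm (Fin n)) (ρ : Perm (Fin m)) :
    Equiv.Perm.sign (Phi σ ρ) = Equiv.Perm.sign σ * Equiv.Perm.sign ρ := by
  rw [Phi, Equiv.Perm.sign_permCongr, Equiv.Perm.sign_sumCongr]

lemma Phi_inj {n m : ℕ} (σ : Perm (Fin n)) : Function.Injective (Phi (m := m) σ) := by
  intro ρ ρ' h
  ext k
  have := congrArg (fun τ : Perm (Fin (n+m)) => τ (Fin.natAdd n k)) h
  simp only [Phi_natAdd] at this
  have h2 : ((ρ k : ℕ)) = ((ρ' k : ℕ)) := by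
    have h3 := congrArg Fin.val this
    simp only [Fin.coe_natAdd] at h3
    omega
  exact h2

lemma Phi_surj_on_cond {n m : ℕ} (σ : Perm (Fin n)) (τ : Perm (Fin (n+m)))
    (h : ∀ i : Fin n, τ (Fin.castAdd m i) = Fin.castAdd m (σ i)) :
    ∃ ρ : Perm (Fin m), τ = Phi σ ρ := by
  set τ' : Perm (Fin n ⊕ Fin m) := finSumFinEquiv.symm.permCongr τ with hτ'
  have hl : ∀ i : Fin n, τ' (Sum.inl i) = Sum.inl (σ i) := by
    intro i
    simp only [hτ', Equiv.permCongr_apply, Equiv.symm_symm, finSumFinEquiv_apply_left, h i,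
      finSumFinEquiv_symm_apply_castAdd]
  have hr : ∀ k : Fin m, ∃ l : Fin m, τ' (Sum.inr k) = Sum.inr l := by
    intro k
    rcases hs : τ' (Sum.inr k) with i | l
    · exfalso
      have h1 : τ' (Sum.inl (σ.symm i)) = Sum.inl i := by rw [hl]; simp
      have := τ'.injective (h1.trans hs.symm)
      simp at this
    · exact ⟨l, rfl⟩
  choose ρf hρf using hr
  have hρinj : Function.Injective ρf := by
    intro k k' hkk
    have : τ' (Sum.inr k) = τ' (Sum.inr k') := by rw [hρf, hρf, hkk]
    simpa using τ'.injective this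
  let ρ : Perm (Fin m) := Equiv.ofBijective ρf (Finite.injective_iff_bijective.mp hρinj)
  refine ⟨ρ, ?_⟩
  have key : τ' = Equiv.sumCongr σ ρ := by
    ext s
    cases s with
    | inl i => simp [hl i]
    | inr k => simp [hρf k, ρ, Equiv.ofBijective_apply]
  have hback : finSumFinEquiv.permCongr τ' = τ := by
    ext b
    simp [hτ', Equiv.permCongr_apply]
  rw [← hback, key]
  rfl

lemma sum_perm_cond {n m : ℕ} (σ : Perm (Fin n)) (F : Perm (Fin (n+m)) → ℂ) :
    (∑ τ : Perm (Fin (n+m)),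
        if ∀ i : Fin n, τ (Fin.castAdd m i) = Fin.castAdd m (σ i) then F τ else 0)
      = ∑ ρ : Perm (Fin m), F (Phi σ ρ) := by
  rw [← Finset.sum_subset (Finset.subset_univ (Finset.univ.image (Phi σ)))]
  · rw [Finset.sum_image (fun x _ y _ h => Phi_inj σ h)]
    refine Finset.sum_congr rfl fun ρ _ => ?_
    rw [if_pos (fun i => Phi_castAdd σ ρ i)]
  · intro τ _ hτ
    rw [if_neg]
    intro hcond
    obtain ⟨ρ, rfl⟩ := Phi_surj_on_cond σ τ hcond
    exact hτ (Finset.mem_image_of_mem _ (Finset.mem_univ ρ))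


lemma aeval_C_eval (n : ℕ) (c : ℂ) (q : Polynomial ℂ) :
    Polynomial.aeval (MvPolynomial.C c : MvPolynomial (Fin n) ℂ) q
      = MvPolynomial.C (q.eval c) := by
  induction q using Polynomial.induction_on' with
  | add p q hp hq => simp [hp, hq]
  | monomial i a =>
      simp [Polynomial.aeval_monomial, MvPolynomial.algebraMap_eq, Polynomial.eval_monomial,
        map_mul, map_pow]

section dets
variable (p : ℕ → Polynomial ℂ) (n m : ℕ) (y : Fin m → ℂ)

noncomputable def Vv : Fin (n + m) → MvPolynomial (Fin n) ℂ :=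
  Fin.append (fun j => MvPolynomial.X j) (fun k => MvPolynomial.C (y k))

/-- generic: det of the p-matrix at points v equals product of differences -/
lemma det_poly_matrix (hmonic : ∀ k, (p k).Monic) (hdeg : ∀ k, (p k).natDegree = k)
    {N : ℕ} (v : Fin N → MvPolynomial (Fin n) ℂ) :
    (Matrix.of fun a b : Fin N => Polynomial.aeval (v b) (p (a : ℕ))).det
      = ∏ i : Fin N, ∏ j ∈ Finset.Ioi i, (v j - v i) := by
  have h1 := Matrix.det_eval_matrixOfPolynomials_eq_det_vandermonde v
    (fun a : Fin N => (p (a : ℕ)).map (algebraMap ℂ (MvPolynomial (Fin n) ℂ)))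
    (fun a => by rw [(hmonic (a : ℕ)).natDegree_map]; exact hdeg _)
    (fun a => (hmonic (a : ℕ)).map _)
  have h2 : (Matrix.of fun a b : Fin N => Polynomial.aeval (v b) (p (a : ℕ)))
      = (Matrix.of fun a b : Fin N =>
          ((p (b : ℕ)).map (algebraMap ℂ (MvPolynomial (Fin n) ℂ))).eval (v a)).transpose := by
    ext a b
    simp [Matrix.transpose_apply, Polynomial.eval_map, Polynomial.aeval_def]
  rw [h2, Matrix.det_transpose, ← h1, Matrix.det_vandermonde]


lemma det_mul_det_eq (hmonic : ∀ k, (p k).Monic) (hdeg : ∀ k, (p k).natDegree = k) :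
    (Matrix.of fun i j : Fin n => Polynomial.aeval (MvPolynomial.X j) (p (i : ℕ))).det *
      (Matrix.of fun a b : Fin (n + m) => Polynomial.aeval (Vv n m y b) (p (a : ℕ))).det
    = MvPolynomial.C (∏ pr ∈ Finset.univ.filter (fun pr : Fin m × Fin m => pr.1 < pr.2),
          (y pr.2 - y pr.1)) *
        ((∏ pr ∈ Finset.univ.filter (fun pr : Fin n × Fin n => pr.1 < pr.2),
            (MvPolynomial.X pr.2 - MvPolynomial.X pr.1)) ^ 2 *
          ∏ j : Fin n, ∏ k : Fin m, (MvPolynomial.C (y k) - MvPolynomial.X j)) := by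
  rw [det_poly_matrix p n hmonic hdeg (fun j => MvPolynomial.X j),
    det_poly_matrix p n hmonic hdeg (Vv n m y)]
  have happ := prod_pairs_append (fun j : Fin n => (MvPolynomial.X j : MvPolynomial (Fin n) ℂ))
    (fun k : Fin m => MvPolynomial.C (y k)) (fun u v => v - u)
  have hVv : ∀ i : Fin (n+m), Vv n m y i
      = Fin.append (fun j : Fin n => (MvPolynomial.X j : MvPolynomial (Fin n) ℂ))
        (fun k : Fin m => MvPolynomial.C (y k)) i := fun i => rfl
  simp only [hVv]
  rw [happ]
  have hmid : (∏ k : Fin m, ∏ l ∈ Finset.Ioi k,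
        ((MvPolynomial.C (y l) : MvPolynomial (Fin n) ℂ) - MvPolynomial.C (y k)))
      = MvPolynomial.C (∏ k : Fin m, ∏ l ∈ Finset.Ioi k, (y l - y k)) := by
    simp only [← map_sub, ← map_prod]
  rw [hmid, prod_pairs_eq (fun i j : Fin n =>
      ((MvPolynomial.X j : MvPolynomial (Fin n) ℂ) - MvPolynomial.X i)),
    prod_pairs_eq (fun i j : Fin m => y j - y i)]
  ring

end dets
lemma muIter_det_mul_det (μ : Polynomial ℂ →ₗ[ℂ] ℂ) (p : ℕ → Polynomial ℂ) (C : ℕ → ℂ)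
    (horth : ∀ i j, μ (p i * p j) = if i = j then C i else 0)
    (n m : ℕ) (y : Fin m → ℂ) :
    muIter μ n
        ((Matrix.of fun i j : Fin n => Polynomial.aeval (MvPolynomial.X j) (p (i : ℕ))).det *
          (Matrix.of fun a b : Fin (n + m) => Polynomial.aeval (Vv n m y b) (p (a : ℕ))).det)
      = (n.factorial : ℂ) * (∏ k ∈ Finset.range n, C k) *
          (Matrix.of fun j k : Fin m => (p (n + (j : ℕ))).eval (y k)).det := by
  have hsgn : ∀ {N : ℕ} (σ : Perm (Fin N)),
      (((Equiv.Perm.sign σ : ℤ) : MvPolynomial (Fin n) ℂ))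
        = MvPolynomial.C (((Equiv.Perm.sign σ : ℤ) : ℂ)) := by
    intro N σ
    exact (map_intCast (MvPolynomial.C : ℂ →+* MvPolynomial (Fin n) ℂ) _).symm
  set w : Perm (Fin (n + m)) → ℂ :=
    fun τ => ∏ k : Fin m, (p ((τ (Fin.natAdd n k)) : ℕ)).eval (y k) with hw
  -- term-level identity inside muIter
  have hsplit : ∀ τ : Perm (Fin (n + m)),
      (∏ b : Fin (n+m), Polynomial.aeval (Vv n m y b) (p ((τ b : ℕ))))
        = (∏ i : Fin n, Polynomial.aeval (MvPolynomial.X i)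
            (p ((τ (Fin.castAdd m i) : ℕ)))) * MvPolynomial.C (w τ) := by
    intro τ
    rw [← Equiv.prod_comp finSumFinEquiv
      (fun b => Polynomial.aeval (Vv n m y b) (p ((τ b : ℕ)))), Fintype.prod_sum_type]
    congr 1
    · exact Finset.prod_congr rfl fun i _ => by
        simp [Vv, finSumFinEquiv_apply_left, Fin.append_left]
    · rw [hw, map_prod]
      exact Finset.prod_congr rfl fun k _ => by
        simp [Vv, finSumFinEquiv_apply_right, Fin.append_right, aeval_C_eval]
  have hterm : ∀ (σ : Perm (Fin n)) (τ : Perm (Fin (n + m))),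
      muIter μ n
        ((((Equiv.Perm.sign σ : ℤ) : MvPolynomial (Fin n) ℂ) *
            ∏ i : Fin n, Polynomial.aeval (MvPolynomial.X i) (p ((σ i : ℕ)))) *
          (((Equiv.Perm.sign τ : ℤ) : MvPolynomial (Fin n) ℂ) *
            ∏ b : Fin (n+m), Polynomial.aeval (Vv n m y b) (p ((τ b : ℕ)))))
      = if (∀ i : Fin n, τ (Fin.castAdd m i) = Fin.castAdd m (σ i)) then
          ((Equiv.Perm.sign σ : ℤ) : ℂ) * ((Equiv.Perm.sign τ : ℤ) : ℂ) * w τ * ∏ i : Fin n, C ((σ i : ℕ)) else 0 := by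
    intro σ τ
    rw [hsplit τ, hsgn σ, hsgn τ]
    have hre : (MvPolynomial.C (((Equiv.Perm.sign σ : ℤ) : ℂ)) *
            ∏ i : Fin n, Polynomial.aeval (MvPolynomial.X i) (p ((σ i : ℕ)))) *
          (MvPolynomial.C (((Equiv.Perm.sign τ : ℤ) : ℂ)) *
            ((∏ i : Fin n, Polynomial.aeval (MvPolynomial.X i)
              (p ((τ (Fin.castAdd m i) : ℕ)))) * MvPolynomial.C (w τ)))
        = MvPolynomial.C (((Equiv.Perm.sign σ : ℤ) : ℂ) * ((Equiv.Perm.sign τ : ℤ) : ℂ) * w τ) *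
            ∏ i : Fin n, Polynomial.aeval (MvPolynomial.X i)
              (p ((σ i : ℕ)) * p ((τ (Fin.castAdd m i) : ℕ))) := by
      rw [map_mul, map_mul]
      rw [show (∏ i : Fin n, Polynomial.aeval (MvPolynomial.X i)
          (p ((σ i : ℕ)) * p ((τ (Fin.castAdd m i) : ℕ))))
        = (∏ i : Fin n, Polynomial.aeval (MvPolynomial.X i) (p ((σ i : ℕ)))) *
          ∏ i : Fin n, Polynomial.aeval (MvPolynomial.X i) (p ((τ (Fin.castAdd m i) : ℕ)))
        from by rw [← Finset.prod_mul_distrib]; exact Finset.prod_congr rfl fun i _ => map_mul _ _ _]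
      ring
    rw [hre, muIter_C_mul, muIter_prod_aeval]
    have hμ : ∀ i : Fin n, μ (p ((σ i : ℕ)) * p ((τ (Fin.castAdd m i) : ℕ)))
        = if ((σ i : ℕ)) = ((τ (Fin.castAdd m i) : ℕ)) then C ((σ i : ℕ)) else 0 :=
      fun i => horth _ _
    rw [Finset.prod_congr rfl fun i _ => hμ i, Fintype.prod_ite_zero]
    have hcond : (∀ i : Fin n, ((σ i : ℕ)) = ((τ (Fin.castAdd m i) : ℕ)))
        ↔ (∀ i : Fin n, τ (Fin.castAdd m i) = Fin.castAdd m (σ i)) := by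
      refine forall_congr' fun i => ?_
      rw [Fin.ext_iff, Fin.coe_castAdd, eq_comm]
    by_cases h : ∀ i : Fin n, τ (Fin.castAdd m i) = Fin.castAdd m (σ i)
    · rw [if_pos h, if_pos (hcond.mpr h)]
    · rw [if_neg h, if_neg (fun hh => h (hcond.mp hh)), mul_zero]
  rw [Matrix.det_apply', Matrix.det_apply', Finset.sum_mul_sum]
  simp only [Matrix.of_apply]
  rw [muIter_sum]
  have hCσ : ∀ σ : Perm (Fin n), (∏ i : Fin n, C ((σ i : ℕ))) = ∏ k ∈ Finset.range n, C k := by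
    intro σ
    rw [Equiv.prod_comp σ (fun i : Fin n => C ((i : ℕ)))]
    exact Fin.prod_univ_eq_prod_range (fun i => C i) n
  have h2 : ∀ σ : Perm (Fin n),
      muIter μ n (∑ τ : Perm (Fin (n + m)),
        (((Equiv.Perm.sign σ : ℤ) : MvPolynomial (Fin n) ℂ) *
            ∏ i : Fin n, Polynomial.aeval (MvPolynomial.X i) (p ((σ i : ℕ)))) *
          (((Equiv.Perm.sign τ : ℤ) : MvPolynomial (Fin n) ℂ) *
            ∏ b : Fin (n+m), Polynomial.aeval (Vv n m y b) (p ((τ b : ℕ)))))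
      = (∏ k ∈ Finset.range n, C k) *
          (Matrix.of fun j k : Fin m => (p (n + (j : ℕ))).eval (y k)).det := by
    intro σ
    rw [muIter_sum, Finset.sum_congr rfl (fun τ _ => hterm σ τ), sum_perm_cond σ]
    have hsq : ((Equiv.Perm.sign σ : ℤ) : ℂ) * ((Equiv.Perm.sign σ : ℤ) : ℂ) = 1 := by
      rcases Int.units_eq_one_or (Equiv.Perm.sign σ) with h | h <;> rw [h] <;> norm_num
    have hφ : ∀ ρ : Perm (Fin m),
        ((Equiv.Perm.sign σ : ℤ) : ℂ) * ((Equiv.Perm.sign (Phi σ ρ) : ℤ) : ℂ) * w (Phi σ ρ) *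
            ∏ i : Fin n, C ((σ i : ℕ))
        = (((Equiv.Perm.sign ρ : ℤ) : ℂ) * ∏ k : Fin m, (p (n + ((ρ k : ℕ)))).eval (y k)) *
            ∏ k ∈ Finset.range n, C k := by
      intro ρ
      have ha : ((Equiv.Perm.sign (Phi σ ρ) : ℤ) : ℂ)
          = ((Equiv.Perm.sign σ : ℤ) : ℂ) * ((Equiv.Perm.sign ρ : ℤ) : ℂ) := by
        rw [Phi_sign, Units.val_mul]
        push_cast
        ring
      have hb : w (Phi σ ρ) = ∏ k : Fin m, (p (n + ((ρ k : ℕ)))).eval (y k) := by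
        rw [hw]
        exact Finset.prod_congr rfl fun k _ => by rw [Phi_natAdd]; rfl
      rw [ha, hb, hCσ σ]
      calc ((Equiv.Perm.sign σ : ℤ) : ℂ) *
              (((Equiv.Perm.sign σ : ℤ) : ℂ) * ((Equiv.Perm.sign ρ : ℤ) : ℂ)) *
              (∏ k : Fin m, (p (n + ((ρ k : ℕ)))).eval (y k)) * ∏ k ∈ Finset.range n, C k
          = (((Equiv.Perm.sign σ : ℤ) : ℂ) * ((Equiv.Perm.sign σ : ℤ) : ℂ)) *
              ((((Equiv.Perm.sign ρ : ℤ) : ℂ) * ∏ k : Fin m, (p (n + ((ρ k : ℕ)))).eval (y k)) *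
              ∏ k ∈ Finset.range n, C k) := by ring
        _ = (((Equiv.Perm.sign ρ : ℤ) : ℂ) * ∏ k : Fin m, (p (n + ((ρ k : ℕ)))).eval (y k)) *
              ∏ k ∈ Finset.range n, C k := by rw [hsq, one_mul]
    rw [Finset.sum_congr rfl (fun ρ _ => hφ ρ), ← Finset.sum_mul]
    have hdet : (∑ ρ : Perm (Fin m), ((Equiv.Perm.sign ρ : ℤ) : ℂ) *
          ∏ k : Fin m, (p (n + ((ρ k : ℕ)))).eval (y k))
        = (Matrix.of fun j k : Fin m => (p (n + (j : ℕ))).eval (y k)).det := by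
      rw [Matrix.det_apply']
      exact Finset.sum_congr rfl fun ρ _ => by simp [Matrix.of_apply]
    rw [hdet]
    ring
  rw [Finset.sum_congr rfl fun σ _ => h2 σ, Finset.sum_const, Finset.card_univ,
    Fintype.card_perm, Fintype.card_fin, nsmul_eq_mul]
  ring

theorem selberg_det_orthopoly (μ : Polynomial ℂ →ₗ[ℂ] ℂ)
    (p : ℕ → Polynomial ℂ) (C : ℕ → ℂ)
    (hmonic : ∀ k, (p k).Monic) (hdeg : ∀ k, (p k).natDegree = k)
    (horth : ∀ i j, μ (p i * p j) = if i = j then C i else 0)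
    (n m : ℕ) (y : Fin m → ℂ) (hy : Function.Injective y) :
    muIter μ n
        ((∏ pr ∈ Finset.univ.filter (fun pr : Fin n × Fin n => pr.1 < pr.2),
            (MvPolynomial.X pr.2 - MvPolynomial.X pr.1)) ^ 2 *
          ∏ j : Fin n, ∏ k : Fin m, (MvPolynomial.C (y k) - MvPolynomial.X j)) =
      (n.factorial : ℂ) * (∏ k ∈ Finset.range n, C k) *
        Matrix.det (Matrix.of fun j k : Fin m => (p (n + (j : ℕ))).eval (y k)) /
        ∏ pr ∈ Finset.univ.filter (fun pr : Fin m × Fin m => pr.1 < pr.2),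
          (y pr.2 - y pr.1) := by
  have hΔy : (∏ pr ∈ Finset.univ.filter (fun pr : Fin m × Fin m => pr.1 < pr.2),
      (y pr.2 - y pr.1)) ≠ 0 := by
    rw [Finset.prod_ne_zero_iff]
    intro pr hpr
    rw [Finset.mem_filter] at hpr
    exact sub_ne_zero.mpr fun h => absurd (hy h) (ne_of_gt hpr.2)
  rw [eq_div_iff hΔy, mul_comm]
  rw [← muIter_C_mul μ n _ _, ← det_mul_det_eq p n m y hmonic hdeg,
    muIter_det_mul_det μ p C horth n m y]
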